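/- Let n ≥ 2 and let d_{i_1},…,d_{i_p}, d_0 ∈ {0,1,…,n−1}^k, and for a digit d set S_d(x) = (x+d)/n. Let c_0 = d_0/(n−1) be the fixed point of S_{d_0}. Then c_0 ∈ S_{d_{i_1}}∘S_{d_{i_2}}∘…∘S_{d_{i_p}}([0,1]^k) if and only if d_{i_1} = d_{i_2} = … = d_{i_p} = d_0. -/

import Mathlib

open Set Pointwise MeasureTheory

noncomputable section

/-- Points of `ℝ^k`. -/
abbrev Pt (k : ℕ) := Fin k → ℝ

/-- A vector with all coordinates in `{0, 1, …, n−1}`. -/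
def IsDigit (n : ℕ) {k : ℕ} (d : Pt k) : Prop :=
  ∀ i, ∃ m : ℕ, m < n ∧ d i = (m : ℝ)

/-- A digit set: a nonempty subset of `{0, 1, …, n−1}^k`. -/
def IsDigitSet (n : ℕ) {k : ℕ} (D : Set (Pt k)) : Prop :=
  D.Nonempty ∧ ∀ d ∈ D, IsDigit n d

/-- `K` is the fractal `k`-cube of order `n` with digit set `D`:
a nonempty compact set with `nK = K + D`. -/
def IsFractalCube (n : ℕ) {k : ℕ} (D K : Set (Pt k)) : Prop :=
  K.Nonempty ∧ IsCompact K ∧ (n : ℝ) • K = K + D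

/-- `α ∈ A_k = {−1, 0, 1}^k`. -/
def IsAk {k : ℕ} (α : Pt k) : Prop :=
  ∀ i, α i = -1 ∨ α i = 0 ∨ α i = 1

/-- The unit cube `P = [0,1]^k`. -/
def unitCube (k : ℕ) : Set (Pt k) := {x | ∀ i, 0 ≤ x i ∧ x i ≤ 1}

/-- The face `P_α = P ∩ (P + α)`. -/
def face {k : ℕ} (α : Pt k) : Set (Pt k) :=
  unitCube k ∩ ((fun x => x + α) '' unitCube k)

/-- `α ⊑ β` : `β i = α i` whenever `α i ≠ 0`. -/
def SqLe {k : ℕ} (α β : Pt k) : Prop := ∀ i, α i ≠ 0 → β i = α i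

/-- `α ⊏ β`. -/
def SqLt {k : ℕ} (α β : Pt k) : Prop := SqLe α β ∧ α ≠ β

/-- `F_α = K₁ ∩ (K₂ + α)`. -/
def interF {k : ℕ} (K1 K2 : Set (Pt k)) (α : Pt k) : Set (Pt k) :=
  K1 ∩ ((fun x => x + α) '' K2)

/-- `G_{αβ} = D₁ ∩ (D₂ + nα − β)`. -/
def Gab (n : ℕ) {k : ℕ} (D1 D2 : Set (Pt k)) (α β : Pt k) : Set (Pt k) :=
  D1 ∩ ((fun x => x + ((n : ℝ) • α - β)) '' D2)

/-- `G_α = G_{αα} = D₁ ∩ (D₂ + (n−1)α)`. -/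
def Ga (n : ℕ) {k : ℕ} (D1 D2 : Set (Pt k)) (α : Pt k) : Set (Pt k) :=
  Gab n D1 D2 α α

/-- `β ≻ α` : there is a chain `α = α₀ ⊏ α₁ ⊏ … ⊏ α_p = β` in `A_k` (`p ≥ 1`)
with all `F_{α_j}` nonempty and all `G_{α_{j−1} α_j}` nonempty. -/
def GSucc (n : ℕ) {k : ℕ} (D1 D2 K1 K2 : Set (Pt k)) (β α : Pt k) : Prop :=
  ∃ p : ℕ, 0 < p ∧ ∃ c : ℕ → Pt k, c 0 = α ∧ c p = β ∧
    (∀ j ≤ p, IsAk (c j)) ∧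
    (∀ j < p, SqLt (c j) (c (j + 1))) ∧
    (∀ j ≤ p, (interF K1 K2 (c j)).Nonempty) ∧
    (∀ j < p, (Gab n D1 D2 (c j) (c (j + 1))).Nonempty)

/-- `β ≽ α`. -/
def GSuccEq (n : ℕ) {k : ℕ} (D1 D2 K1 K2 : Set (Pt k)) (β α : Pt k) : Prop :=
  GSucc n D1 D2 K1 K2 β α ∨ β = α

/-- The map `S_d(x) = (x + d)/n`. -/
def Sdig (n : ℕ) {k : ℕ} (d : Pt k) : Pt k → Pt k :=
  fun x => (n : ℝ)⁻¹ • (x + d)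

/-- The `p`-th refinement digit set
`D^(p) = { n^{p−1} d₁ + n^{p−2} d₂ + … + d_p : (d₁, …, d_p) ∈ D^p }`. -/
def refineD (n p : ℕ) {k : ℕ} (D : Set (Pt k)) : Set (Pt k) :=
  {x | ∃ f : Fin p → Pt k, (∀ j, f j ∈ D) ∧
    x = ∑ j : Fin p, ((n : ℝ) ^ (p - 1 - (j : ℕ))) • f j}

/-- A maximal vertex of the structure graph: `F_β ≠ ∅` and no `γ ≻ β`. -/
def IsMaxVertex (n : ℕ) {k : ℕ} (D1 D2 K1 K2 : Set (Pt k)) (β : Pt k) : Prop :=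
  IsAk β ∧ (interF K1 K2 β).Nonempty ∧ ¬∃ γ, IsAk γ ∧ GSucc n D1 D2 K1 K2 γ β

/-- The product `∏ #G_{α_j α_{j+1}}` over consecutive pairs of a chain. -/
def chainProd (n : ℕ) {k : ℕ} (D1 D2 : Set (Pt k)) : List (Pt k) → ℕ
  | [] => 1
  | [_] => 1
  | a :: b :: rest => (Gab n D1 D2 a b).ncard * chainProd n D1 D2 (b :: rest)

/-- A chain `α = α₁ ⊏ α₂ ⊏ … ⊏ α_p = β` inside `Γ_α` ending at a maximal vertex `β`. -/
def IsMaxChainFrom (n : ℕ) {k : ℕ} (D1 D2 K1 K2 : Set (Pt k)) (α : Pt k)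
    (c : List (Pt k)) : Prop :=
  c ≠ [] ∧ c.head? = some α ∧ List.Chain' SqLt c ∧
  (∀ β ∈ c, IsAk β ∧ GSuccEq n D1 D2 K1 K2 β α) ∧
  ∃ β, c.getLast? = some β ∧ IsMaxVertex n D1 D2 K1 K2 β


lemma digit_eq_aux {n a b : ℕ} (hn : 2 ≤ n) (ha : a < n) (hb : b < n)
    (h1 : (0:ℤ) ≤ (n:ℤ) * a - ((n:ℤ) - 1) * b)
    (h2 : (n:ℤ) * a - ((n:ℤ) - 1) * b ≤ (n:ℤ) - 1) : b = a := by
  rcases lt_trichotomy a b with h | h | h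
  · -- a < b : n*a - (n-1)*b = a - (n-1)*(b-a) ≤ a - (n-1) ≤ 0, equality impossible
    exfalso
    have hba : (1:ℤ) ≤ (b:ℤ) - a := by omega
    have ha' : (a:ℤ) ≤ (n:ℤ) - 1 := by omega
    have hn' : (2:ℤ) ≤ n := by exact_mod_cast hn
    have key : (n:ℤ) * a - ((n:ℤ) - 1) * b = (a:ℤ) - ((n:ℤ) - 1) * ((b:ℤ) - a) := by ring
    have : ((n:ℤ) - 1) * ((b:ℤ) - a) ≥ (n:ℤ) - 1 := by nlinarith
    have heq : (a:ℤ) = ((n:ℤ) - 1) * ((b:ℤ) - a) := by omega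
    have : ((b:ℤ) - a) = 1 := by nlinarith
    omega
  · omega
  · exfalso
    have hab : (1:ℤ) ≤ (a:ℤ) - b := by omega
    have hb' : (0:ℤ) ≤ b := by positivity
    have hn' : (2:ℤ) ≤ n := by exact_mod_cast hn
    have key : (n:ℤ) * a - ((n:ℤ) - 1) * b = (b:ℤ) + (n:ℤ) * ((a:ℤ) - b) := by ring
    nlinarith

lemma c0_mem_unitCube {k n : ℕ} (hn : 2 ≤ n) {d0 : Pt k} (h0 : IsDigit n d0) :
    ((n : ℝ) - 1)⁻¹ • d0 ∈ unitCube k := by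
  have hn1 : (0:ℝ) < (n:ℝ) - 1 := by
    have : (2:ℝ) ≤ n := by exact_mod_cast hn
    linarith
  intro i
  obtain ⟨m, hm, hme⟩ := h0 i
  have hm' : (m:ℝ) ≤ (n:ℝ) - 1 := by
    have : (m:ℝ) + 1 ≤ n := by exact_mod_cast hm
    linarith
  constructor
  · simp only [Pi.smul_apply, smul_eq_mul, hme]
    positivity
  · simp only [Pi.smul_apply, smul_eq_mul, hme]
    rw [inv_mul_le_iff₀ hn1]
    linarith

lemma Sdig_fixed {k n : ℕ} (hn : 2 ≤ n) (d0 : Pt k) :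
    Sdig n d0 (((n : ℝ) - 1)⁻¹ • d0) = ((n : ℝ) - 1)⁻¹ • d0 := by
  have hn0 : (n:ℝ) ≠ 0 := by positivity
  have hn1 : (n:ℝ) - 1 ≠ 0 := by
    have : (2:ℝ) ≤ n := by exact_mod_cast hn
    linarith
  funext i
  simp only [Sdig, Pi.smul_apply, Pi.add_apply, smul_eq_mul]
  field_simp
  ring

lemma Sdig_image_subset {k n : ℕ} (hn : 2 ≤ n) {e : Pt k} (he : IsDigit n e) :
    Sdig n e '' unitCube k ⊆ unitCube k := by
  rintro _ ⟨x, hx, rfl⟩ i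
  obtain ⟨m, hm, hme⟩ := he i
  have hnpos : (0:ℝ) < n := by positivity
  have hm' : (m:ℝ) ≤ (n:ℝ) - 1 := by
    have : (m:ℝ) + 1 ≤ n := by exact_mod_cast hm
    linarith
  obtain ⟨hx0, hx1⟩ := hx i
  simp only [Sdig, Pi.smul_apply, Pi.add_apply, smul_eq_mul, hme]
  constructor
  · positivity
  · rw [inv_mul_le_iff₀ hnpos]
    linarith

/-- If `c0 = S_e y` with `y ∈ [0,1]^k` then `e = d0` and `y = c0`. -/
lemma Sdig_fixed_inv {k n : ℕ} (hn : 2 ≤ n) {d0 e y : Pt k} (h0 : IsDigit n d0)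
    (he : IsDigit n e) (hy : y ∈ unitCube k)
    (hc : Sdig n e y = ((n : ℝ) - 1)⁻¹ • d0) :
    e = d0 ∧ y = ((n : ℝ) - 1)⁻¹ • d0 := by
  have hn0 : (0:ℝ) < n := by positivity
  have hn1 : (0:ℝ) < (n:ℝ) - 1 := by
    have : (2:ℝ) ≤ n := by exact_mod_cast hn
    linarith
  have heq : ∀ i, e i = d0 i := by
    intro i
    obtain ⟨a, ha, hae⟩ := h0 i
    obtain ⟨b, hb, hbe⟩ := he i
    obtain ⟨hy0, hy1⟩ := hy i
    have hci : (n:ℝ)⁻¹ * (y i + e i) = ((n:ℝ) - 1)⁻¹ * d0 i := by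
      have := congrFun hc i
      simpa [Sdig] using this
    have hyi : y i = (n:ℝ) * (((n:ℝ) - 1)⁻¹ * d0 i) - e i := by
      field_simp at hci ⊢
      linarith
    rw [hae, hbe] at hyi
    have key1 : (0:ℝ) ≤ (n:ℝ) * a - ((n:ℝ) - 1) * b := by
      rw [hyi] at hy0
      have h' : (0:ℝ) ≤ ((n:ℝ) * (((n:ℝ) - 1)⁻¹ * a) - b) * ((n:ℝ) - 1) :=
        mul_nonneg hy0 hn1.le
      calc (0:ℝ) ≤ ((n:ℝ) * (((n:ℝ) - 1)⁻¹ * a) - b) * ((n:ℝ) - 1) := h'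
        _ = (n:ℝ) * a - ((n:ℝ) - 1) * b := by field_simp
    have key2 : (n:ℝ) * a - ((n:ℝ) - 1) * b ≤ (n:ℝ) - 1 := by
      rw [hyi] at hy1
      have h' : ((n:ℝ) * (((n:ℝ) - 1)⁻¹ * a) - b) * ((n:ℝ) - 1) ≤ (n:ℝ) - 1 := by
        nlinarith
      calc (n:ℝ) * a - ((n:ℝ) - 1) * b
          = ((n:ℝ) * (((n:ℝ) - 1)⁻¹ * a) - b) * ((n:ℝ) - 1) := by field_simp
        _ ≤ (n:ℝ) - 1 := h'
    have : b = a := by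
      apply digit_eq_aux hn ha hb
      · exact_mod_cast key1
      · exact_mod_cast key2
    rw [hae, hbe, this]
  have he0 : e = d0 := funext heq
  refine ⟨he0, ?_⟩
  have : Sdig n e y = Sdig n d0 y := by rw [he0]
  rw [this] at hc
  have hinj : Function.Injective (Sdig n d0) := by
    intro x1 x2 h12
    have : (n:ℝ)⁻¹ • (x1 + d0) = (n:ℝ)⁻¹ • (x2 + d0) := h12
    have h3 := smul_right_injective (Pt k) (by positivity : ((n:ℝ)⁻¹) ≠ 0) this
    exact add_right_cancel h3
  have := Sdig_fixed hn (k := k) d0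
  apply hinj
  rw [hc, this]

lemma foldr_image_subset {k n : ℕ} (hn : 2 ≤ n) :
    ∀ L : List (Pt k), (∀ e ∈ L, IsDigit n e) →
    ((L.map (Sdig n)).foldr (· ∘ ·) id) '' unitCube k ⊆ unitCube k := by
  intro L
  induction L with
  | nil => intro _; simp
  | cons e L ih =>
    intro hL
    simp only [List.map_cons, List.foldr_cons]
    rw [Set.image_comp]
    refine (Set.image_mono (ih fun x hx => hL x (List.mem_cons_of_mem _ hx))).trans ?_
    exact Sdig_image_subset hn (hL e List.mem_cons_self)

lemma key_iff {k n : ℕ} (hn : 2 ≤ n) {d0 : Pt k} (h0 : IsDigit n d0) :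
    ∀ L : List (Pt k), (∀ e ∈ L, IsDigit n e) →
    (((n : ℝ) - 1)⁻¹ • d0 ∈ ((L.map (Sdig n)).foldr (· ∘ ·) id) '' unitCube k ↔
      ∀ e ∈ L, e = d0) := by
  intro L
  induction L with
  | nil =>
    intro _
    simp only [List.map_nil, List.foldr_nil, Set.image_id]
    simp [c0_mem_unitCube hn h0]
  | cons e L ih =>
    intro hL
    have he : IsDigit n e := hL e List.mem_cons_self
    have hL' : ∀ x ∈ L, IsDigit n x := fun x hx => hL x (List.mem_cons_of_mem _ hx)
    simp only [List.map_cons, List.foldr_cons]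
    rw [Set.image_comp]
    constructor
    · rintro ⟨y, hy, hc⟩
      have hy' : y ∈ unitCube k := foldr_image_subset hn L hL' hy
      obtain ⟨he0, hy0⟩ := Sdig_fixed_inv hn h0 he hy' hc
      intro x hx
      rcases List.mem_cons.mp hx with rfl | hx
      · exact he0
      · exact ((ih hL').mp (hy0 ▸ hy)) x hx
    · intro hall
      have he0 : e = d0 := hall e List.mem_cons_self
      have hmem : ((n : ℝ) - 1)⁻¹ • d0 ∈
          ((L.map (Sdig n)).foldr (· ∘ ·) id) '' unitCube k :=
        (ih hL').mpr fun x hx => hall x (List.mem_cons_of_mem _ hx)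
      exact ⟨_, hmem, by rw [he0]; exact Sdig_fixed hn d0⟩

/-- `c₀ = d₀/(n−1)` belongs to `S_{d_{i₁}} ∘ … ∘ S_{d_{i_p}}([0,1]^k)`
iff all the digits `d_{i_j}` are equal to `d₀`. -/
theorem fixedPoint_mem_cylinder_iff {k n p : ℕ} (hk : 1 ≤ k) (hn : 2 ≤ n) (hp : 1 ≤ p)
    (d : Fin p → Pt k) (hd : ∀ j, IsDigit n (d j))
    (d0 : Pt k) (h0 : IsDigit n d0) :
    ((n : ℝ) - 1)⁻¹ • d0 ∈
      ((List.ofFn fun j => Sdig n (d j)).foldr (· ∘ ·) id) '' unitCube k ↔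
    ∀ j, d j = d0 := by
  have hmap : (List.ofFn fun j => Sdig n (d j)) = (List.ofFn d).map (Sdig n) := by
    rw [List.map_ofFn]; rfl
  rw [hmap, key_iff hn h0 (List.ofFn d) (by
    intro e he
    obtain ⟨j, rfl⟩ := (List.mem_ofFn.mp he)
    exact hd j)]
  constructor
  · intro h j
    exact h (d j) ((List.mem_ofFn.mpr ⟨j, rfl⟩))
  · intro h e he
    obtain ⟨j, rfl⟩ := (List.mem_ofFn.mp he)
    exact h j
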